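/- For α, β, γ ∈ (0,1), the function h(v) = v + (((1+v^{1/α})^α − v)^{1/γ} + ((1+v^{1/β})^β − v)^{1/γ})^γ satisfies h'(0⁺) = 1 − 2^γ < 0 and h'(1) > 0; consequently h' has a unique zero in (0,1), and h is strictly increasing on [1,∞). -/

import Mathlib

open Topology Real Set Filter

private lemma Apos' {e : ℝ} (he : 0 < e) {v : ℝ} (hv : 0 ≤ v) :
    0 < (1 + v ^ (1/e)) ^ e - v := by
  have h0 : (0:ℝ) ≤ v ^ (1/e) := Real.rpow_nonneg hv _
  have h1 : v ^ (1/e) < 1 + v ^ (1/e) := by linarith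
  have h2 : (v ^ (1/e)) ^ e < (1 + v ^ (1/e)) ^ e := Real.rpow_lt_rpow h0 h1 he
  have h3 : (v ^ (1/e)) ^ e = v := by
    rw [← Real.rpow_mul hv, one_div, inv_mul_cancel₀ he.ne', Real.rpow_one]
  linarith

private lemma hasDerivAt_A {e : ℝ} (he : 0 < e) {v : ℝ} (hv : 0 < v) :
    HasDerivAt (fun v : ℝ => (1 + v ^ (1/e)) ^ e - v)
      ((1 + v ^ (1/e)) ^ (e-1) * v ^ (1/e - 1) - 1) v := by
  have h0 : (0:ℝ) ≤ v ^ (1/e) := Real.rpow_nonneg hv.le _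
  have hu : (0:ℝ) < 1 + v ^ (1/e) := by linarith
  have h1 : HasDerivAt (fun x : ℝ => x ^ (1/e)) ((1/e) * v ^ (1/e - 1)) v :=
    Real.hasDerivAt_rpow_const (Or.inl hv.ne')
  have h2 : HasDerivAt (fun x : ℝ => 1 + x ^ (1/e)) ((1/e) * v ^ (1/e - 1)) v :=
    h1.const_add 1
  have h3 : HasDerivAt (fun y : ℝ => y ^ e) (e * (1 + v ^ (1/e)) ^ (e-1)) (1 + v ^ (1/e)) :=
    Real.hasDerivAt_rpow_const (Or.inl hu.ne')
  have h4 := (h3.comp v h2).sub (hasDerivAt_id v)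
  refine h4.congr_deriv ?_
  field_simp

private lemma hasDerivAt_A' {e : ℝ} (he : 0 < e) {v : ℝ} (hv : 0 < v) :
    HasDerivAt (fun v : ℝ => (1 + v ^ (1/e)) ^ (e-1) * v ^ (1/e - 1) - 1)
      ((1/e - 1) * (1 + v ^ (1/e)) ^ (e-2) * v ^ (1/e - 2)) v := by
  have h0 : (0:ℝ) ≤ v ^ (1/e) := Real.rpow_nonneg hv.le _
  have hu : (0:ℝ) < 1 + v ^ (1/e) := by linarith
  have h1 : HasDerivAt (fun x : ℝ => x ^ (1/e)) ((1/e) * v ^ (1/e - 1)) v :=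
    Real.hasDerivAt_rpow_const (Or.inl hv.ne')
  have h2 : HasDerivAt (fun x : ℝ => (1 + x ^ (1/e)) ^ (e-1))
      ((e-1) * (1 + v ^ (1/e)) ^ (e-1-1) * ((1/e) * v ^ (1/e - 1))) v :=
    (Real.hasDerivAt_rpow_const (Or.inl hu.ne')).comp (h₂ := fun y => y ^ (e-1)) v (h1.const_add 1)
  have h3 : HasDerivAt (fun x : ℝ => x ^ (1/e - 1)) ((1/e - 1) * v ^ (1/e - 1 - 1)) v :=
    Real.hasDerivAt_rpow_const (Or.inl hv.ne')
  have h4 := (h2.mul h3).sub_const 1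
  refine h4.congr_deriv ?_
  rw [show e-1-1 = e-2 by ring, show 1/e-1-1 = 1/e-2 by ring]
  have ev : v ^ (1/e - 1) * v ^ (1/e - 1) = v ^ (1/e - 2) * v ^ (1/e) := by
    rw [← Real.rpow_add hv, ← Real.rpow_add hv]; ring_nf
  have eu : (1 + v ^ (1/e)) ^ (e-1) = (1 + v ^ (1/e)) ^ (e-2) * (1 + v ^ (1/e)) := by
    rw [show e-1 = (e-2)+1 by ring, Real.rpow_add hu, Real.rpow_one]
  have expand : (e-1) * (1 + v ^ (1/e)) ^ (e-2) * ((1/e) * v ^ (1/e-1)) * v ^ (1/e-1)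
      = (e-1) * (1/e) * ((1 + v ^ (1/e)) ^ (e-2) * (v ^ (1/e-2) * v ^ (1/e))) := by
    rw [← ev]; ring
  rw [eu, expand]
  field_simp
  ring

private lemma strictConvexOn_A {e : ℝ} (he : e ∈ Set.Ioo (0:ℝ) 1) :
    StrictConvexOn ℝ (Set.Ioi (0:ℝ)) (fun v : ℝ => (1 + v ^ (1/e)) ^ e - v) := by
  apply strictConvexOn_of_deriv2_pos (convex_Ioi 0)
  · intro x hx
    exact (hasDerivAt_A he.1 hx).continuousAt.continuousWithinAt
  · intro x hx
    rw [interior_Ioi] at hx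
    have hev : deriv (fun v : ℝ => (1 + v ^ (1/e)) ^ e - v)
        =ᶠ[𝓝 x] (fun v : ℝ => (1 + v ^ (1/e)) ^ (e-1) * v ^ (1/e - 1) - 1) := by
      filter_upwards [Ioi_mem_nhds hx] with y hy using (hasDerivAt_A he.1 hy).deriv
    have : (deriv^[2] (fun v : ℝ => (1 + v ^ (1/e)) ^ e - v)) x
        = deriv (fun v : ℝ => (1 + v ^ (1/e)) ^ (e-1) * v ^ (1/e - 1) - 1) x := by
      show deriv (deriv _) x = _
      exact hev.deriv_eq
    rw [this, (hasDerivAt_A' he.1 hx).deriv]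
    have h0 : (0:ℝ) ≤ x ^ (1/e) := Real.rpow_nonneg hx.le _
    have hu : (0:ℝ) < 1 + x ^ (1/e) := by linarith
    have h1 : 0 < 1/e - 1 := by
      rw [sub_pos]
      exact (one_lt_one_div he.1 he.2)
    exact mul_pos (mul_pos h1 (Real.rpow_pos_of_pos hu _)) (Real.rpow_pos_of_pos hx _)

private lemma minkowski2 {p : ℝ} (hp : 1 ≤ p) {a b c d : ℝ} (ha : 0 ≤ a) (hb : 0 ≤ b)
    (hc : 0 ≤ c) (hd : 0 ≤ d) :
    ((a+c)^p + (b+d)^p) ^ (1/p) ≤ (a^p + b^p)^(1/p) + (c^p + d^p)^(1/p) := by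
  have := Real.Lp_add_le_of_nonneg (s := (Finset.univ : Finset (Fin 2)))
    (f := ![a,b]) (g := ![c,d]) hp
    (by intro i _; fin_cases i <;> simpa) (by intro i _; fin_cases i <;> simpa)
  simpa [Fin.sum_univ_two] using this

private lemma Nhom {p : ℝ} (hp : 0 < p) {t a b : ℝ} (ht : 0 ≤ t) (ha : 0 ≤ a) (hb : 0 ≤ b) :
    ((t*a)^p + (t*b)^p)^(1/p) = t * (a^p + b^p)^(1/p) := by
  rw [Real.mul_rpow ht ha, Real.mul_rpow ht hb, ← mul_add,
    Real.mul_rpow (Real.rpow_nonneg ht p) (by positivity),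
    ← Real.rpow_mul ht, mul_one_div_cancel hp.ne', Real.rpow_one]

private lemma strictConvexOn_comp {p : ℝ} (hp : 1 ≤ p) {A B : ℝ → ℝ}
    (hA : StrictConvexOn ℝ (Set.Ioi (0:ℝ)) A) (hB : StrictConvexOn ℝ (Set.Ioi (0:ℝ)) B)
    (hApos : ∀ v ∈ Set.Ioi (0:ℝ), 0 < A v) (hBpos : ∀ v ∈ Set.Ioi (0:ℝ), 0 < B v) :
    StrictConvexOn ℝ (Set.Ioi (0:ℝ)) (fun v => (A v ^ p + B v ^ p) ^ (1/p)) := by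
  have hp0 : 0 < p := lt_of_lt_of_le one_pos hp
  refine ⟨convex_Ioi 0, ?_⟩
  intro x hx y hy hxy a b ha hb hab
  simp only [smul_eq_mul]
  have hm : a * x + b * y ∈ Set.Ioi (0:ℝ) := by
    have := (convex_Ioi (0:ℝ)) hx hy ha.le hb.le hab
    simpa [smul_eq_mul] using this
  have hAm := hApos _ hm
  have hBm := hBpos _ hm
  have hAx := hApos _ hx; have hAy := hApos _ hy
  have hBx := hBpos _ hx; have hBy := hBpos _ hy
  have h1 : A (a*x+b*y) < a * A x + b * A y := by
    have := hA.2 hx hy hxy ha hb hab; simpa [smul_eq_mul] using this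
  have h2 : B (a*x+b*y) < a * B x + b * B y := by
    have := hB.2 hx hy hxy ha hb hab; simpa [smul_eq_mul] using this
  have hnn : (0:ℝ) ≤ A (a*x+b*y) ^ p + B (a*x+b*y) ^ p :=
    add_nonneg (Real.rpow_nonneg hAm.le p) (Real.rpow_nonneg hBm.le p)
  calc (A (a*x+b*y) ^ p + B (a*x+b*y) ^ p) ^ (1/p)
      < ((a * A x + b * A y) ^ p + (a * B x + b * B y) ^ p) ^ (1/p) := by
        apply Real.rpow_lt_rpow hnn _ (by positivity)
        exact add_lt_add (Real.rpow_lt_rpow hAm.le h1 hp0) (Real.rpow_lt_rpow hBm.le h2 hp0)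
    _ ≤ ((a * A x)^p + (a * B x)^p)^(1/p) + ((b * A y)^p + (b * B y)^p)^(1/p) :=
        minkowski2 hp (by positivity) (by positivity) (by positivity) (by positivity)
    _ = a * (A x ^ p + B x ^ p)^(1/p) + b * (A y ^ p + B y ^ p)^(1/p) := by
        rw [Nhom hp0 ha.le hAx.le hBx.le, Nhom hp0 hb.le hAy.le hBy.le]

private lemma strictConvexOn_g {α β γ : ℝ} (hα : α ∈ Set.Ioo (0:ℝ) 1)
    (hβ : β ∈ Set.Ioo (0:ℝ) 1) (hγ : γ ∈ Set.Ioo (0:ℝ) 1) :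
    StrictConvexOn ℝ (Set.Ioi (0:ℝ))
      (fun v : ℝ => (((1 + v ^ (1/α)) ^ α - v) ^ (1/γ) + ((1 + v ^ (1/β)) ^ β - v) ^ (1/γ)) ^ γ) := by
  have hp : 1 ≤ 1/γ := (one_lt_one_div hγ.1 hγ.2).le
  have := strictConvexOn_comp hp (strictConvexOn_A hα) (strictConvexOn_A hβ)
    (fun v hv => Apos' hα.1 (le_of_lt hv)) (fun v hv => Apos' hβ.1 (le_of_lt hv))
  rw [one_div_one_div] at this
  exact this

private lemma coeff_lt_one {γ a b : ℝ} (hγ : γ ∈ Set.Ioo (0:ℝ) 1) (ha : 0 < a) (hb : 0 < b) :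
    (a^(1/γ) + b^(1/γ))^(γ-1) * a^(1/γ-1) < 1 := by
  have hS : a^(1/γ) < a^(1/γ) + b^(1/γ) := lt_add_of_pos_right _ (Real.rpow_pos_of_pos hb _)
  have h1 : (a^(1/γ)+b^(1/γ))^(γ-1) < (a^(1/γ))^(γ-1) :=
    Real.rpow_lt_rpow_of_neg (Real.rpow_pos_of_pos ha _) hS (by linarith [hγ.2])
  have h2 : (a^(1/γ))^(γ-1) = a^((1/γ)*(γ-1)) := (Real.rpow_mul ha.le _ _).symm
  calc (a^(1/γ) + b^(1/γ))^(γ-1) * a^(1/γ-1)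
      < a^((1/γ)*(γ-1)) * a^(1/γ-1) :=
        mul_lt_mul_of_pos_right (h1.trans_eq h2) (Real.rpow_pos_of_pos ha _)
    _ = a ^ ((1/γ)*(γ-1) + (1/γ-1)) := (Real.rpow_add ha _ _).symm
    _ = 1 := by
        rw [show (1/γ)*(γ-1) + (1/γ-1) = (0:ℝ) by have h0 := hγ.1.ne'; field_simp; ring, Real.rpow_zero]

private lemma hasDerivAt_h {α β γ : ℝ} (hα : α ∈ Set.Ioo (0:ℝ) 1) (hβ : β ∈ Set.Ioo (0:ℝ) 1)
    (hγ : γ ∈ Set.Ioo (0:ℝ) 1) {v : ℝ} (hv : 0 < v) :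
    HasDerivAt
      (fun v : ℝ => v + (((1 + v ^ (1/α)) ^ α - v) ^ (1/γ) + ((1 + v ^ (1/β)) ^ β - v) ^ (1/γ)) ^ γ)
      (1 + γ * (((1 + v ^ (1/α)) ^ α - v) ^ (1/γ) + ((1 + v ^ (1/β)) ^ β - v) ^ (1/γ)) ^ (γ-1) *
        ((1/γ) * ((1 + v ^ (1/α)) ^ α - v) ^ (1/γ-1) * ((1 + v ^ (1/α)) ^ (α-1) * v ^ (1/α-1) - 1)
         + (1/γ) * ((1 + v ^ (1/β)) ^ β - v) ^ (1/γ-1) * ((1 + v ^ (1/β)) ^ (β-1) * v ^ (1/β-1) - 1))) v := by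
  have hAv := Apos' hα.1 hv.le
  have hBv := Apos' hβ.1 hv.le
  have hA := hasDerivAt_A hα.1 hv
  have hB := hasDerivAt_A hβ.1 hv
  have hAp : HasDerivAt (fun v : ℝ => ((1 + v ^ (1/α)) ^ α - v) ^ (1/γ))
      ((1/γ) * ((1 + v ^ (1/α)) ^ α - v) ^ (1/γ-1) *
        ((1 + v ^ (1/α)) ^ (α-1) * v ^ (1/α-1) - 1)) v := by
    have := hA.rpow_const (p := 1/γ) (Or.inl hAv.ne')
    convert this using 1
    ring
  have hBp : HasDerivAt (fun v : ℝ => ((1 + v ^ (1/β)) ^ β - v) ^ (1/γ))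
      ((1/γ) * ((1 + v ^ (1/β)) ^ β - v) ^ (1/γ-1) *
        ((1 + v ^ (1/β)) ^ (β-1) * v ^ (1/β-1) - 1)) v := by
    have := hB.rpow_const (p := 1/γ) (Or.inl hBv.ne')
    convert this using 1
    ring
  have hS := hAp.add hBp
  have hSpos : 0 < ((1 + v ^ (1/α)) ^ α - v) ^ (1/γ) + ((1 + v ^ (1/β)) ^ β - v) ^ (1/γ) :=
    add_pos (Real.rpow_pos_of_pos hAv _) (Real.rpow_pos_of_pos hBv _)
  have hout := hS.rpow_const (p := γ) (Or.inl hSpos.ne')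
  have hfin := (hasDerivAt_id v).add hout
  refine hfin.congr_deriv ?_
  simp only [Pi.add_apply]
  ring

set_option maxHeartbeats 1000000 in
theorem stmt7 (α β γ : ℝ) (hα : α ∈ Set.Ioo (0:ℝ) 1) (hβ : β ∈ Set.Ioo (0:ℝ) 1)
    (hγ : γ ∈ Set.Ioo (0:ℝ) 1)
    (h : ℝ → ℝ)
    (hh : ∀ v : ℝ, h v =
      v + (((1 + v ^ (1/α)) ^ α - v) ^ (1/γ) + ((1 + v ^ (1/β)) ^ β - v) ^ (1/γ)) ^ γ) :
    Filter.Tendsto (deriv h) (𝓝[>] (0:ℝ)) (𝓝 (1 - (2:ℝ) ^ γ)) ∧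
    1 - (2:ℝ) ^ γ < 0 ∧
    0 < deriv h 1 ∧
    (∃! v : ℝ, v ∈ Set.Ioo (0:ℝ) 1 ∧ deriv h v = 0) ∧
    StrictMonoOn h (Set.Ici 1) := by
  have hγ0 := hγ.1
  have hfun : h = fun v : ℝ =>
      v + (((1 + v ^ (1/α)) ^ α - v) ^ (1/γ) + ((1 + v ^ (1/β)) ^ β - v) ^ (1/γ)) ^ γ :=
    funext hh
  set G : ℝ → ℝ := fun v =>
    1 + γ * (((1 + v ^ (1/α)) ^ α - v) ^ (1/γ) + ((1 + v ^ (1/β)) ^ β - v) ^ (1/γ)) ^ (γ-1) *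
      ((1/γ) * ((1 + v ^ (1/α)) ^ α - v) ^ (1/γ-1) * ((1 + v ^ (1/α)) ^ (α-1) * v ^ (1/α-1) - 1)
       + (1/γ) * ((1 + v ^ (1/β)) ^ β - v) ^ (1/γ-1) * ((1 + v ^ (1/β)) ^ (β-1) * v ^ (1/β-1) - 1))
    with hGdef
  have hd : ∀ v : ℝ, 0 < v → HasDerivAt h (G v) v := fun v hv => by
    rw [hfun]; exact hasDerivAt_h hα hβ hγ hv
  have hderiv : ∀ v : ℝ, 0 < v → deriv h v = G v := fun v hv => (hd v hv).deriv
  have hconv : StrictConvexOn ℝ (Set.Ioi (0:ℝ)) h := by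
    rw [hfun]
    exact (convexOn_id (convex_Ioi 0)).add_strictConvexOn (strictConvexOn_g hα hβ hγ)
  have hmono : StrictMonoOn (deriv h) (Set.Ioi (0:ℝ)) :=
    hconv.strictMonoOn_deriv (fun x hx => (hd x hx).differentiableAt)
  have h2γ : (1:ℝ) < 2 ^ γ := by
    have : (2:ℝ)^(0:ℝ) < 2^γ := Real.rpow_lt_rpow_of_exponent_lt one_lt_two hγ0
    simpa using this
  -- limit at 0+
  have tpow : ∀ c : ℝ, 0 < c → Tendsto (fun v : ℝ => v ^ c) (𝓝[>] (0:ℝ)) (𝓝 0) := by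
    intro c hc
    have h1 := (Real.continuousAt_rpow_const 0 c (Or.inr hc.le)).tendsto
    rw [Real.zero_rpow hc.ne'] at h1
    exact h1.mono_left nhdsWithin_le_nhds
  have t0 : Tendsto (fun v : ℝ => v) (𝓝[>] (0:ℝ)) (𝓝 0) :=
    tendsto_id.mono_left nhdsWithin_le_nhds
  have hinv : ∀ e : ℝ, e ∈ Set.Ioo (0:ℝ) 1 → 0 < 1/e - 1 := fun e he => by
    rw [sub_pos]; exact one_lt_one_div he.1 he.2
  have tbase : ∀ e : ℝ, e ∈ Set.Ioo (0:ℝ) 1 →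
      Tendsto (fun v : ℝ => 1 + v ^ (1/e)) (𝓝[>] (0:ℝ)) (𝓝 1) := by
    intro e he
    have := (tpow (1/e) (by have := he.1; positivity)).const_add 1
    simpa using this
  have tA : ∀ e : ℝ, e ∈ Set.Ioo (0:ℝ) 1 →
      Tendsto (fun v : ℝ => (1 + v ^ (1/e)) ^ e - v) (𝓝[>] (0:ℝ)) (𝓝 1) := by
    intro e he
    have h1 := ((tbase e he).rpow_const (p := e) (Or.inl one_ne_zero)).sub t0
    simpa using h1
  have tA' : ∀ e : ℝ, e ∈ Set.Ioo (0:ℝ) 1 →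
      Tendsto (fun v : ℝ => (1 + v ^ (1/e)) ^ (e-1) * v ^ (1/e-1) - 1) (𝓝[>] (0:ℝ)) (𝓝 (-1)) := by
    intro e he
    have h1 := (tbase e he).rpow_const (p := e-1) (Or.inl one_ne_zero)
    rw [Real.one_rpow] at h1
    have h2 := (h1.mul (tpow (1/e-1) (hinv e he))).sub_const 1
    simpa using h2
  have tApow : ∀ e : ℝ, e ∈ Set.Ioo (0:ℝ) 1 → ∀ c : ℝ,
      Tendsto (fun v : ℝ => ((1 + v ^ (1/e)) ^ e - v) ^ c) (𝓝[>] (0:ℝ)) (𝓝 1) := by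
    intro e he c
    have := (tA e he).rpow_const (p := c) (Or.inl one_ne_zero)
    rwa [Real.one_rpow] at this
  have tS : Tendsto (fun v : ℝ =>
      ((1 + v ^ (1/α)) ^ α - v) ^ (1/γ) + ((1 + v ^ (1/β)) ^ β - v) ^ (1/γ))
      (𝓝[>] (0:ℝ)) (𝓝 2) := by
    have h1 := (tApow α hα (1/γ)).add (tApow β hβ (1/γ))
    exact (by norm_num : (1:ℝ)+1 = 2) ▸ h1
  have tSp := tS.rpow_const (p := γ-1) (Or.inl two_ne_zero)
  have tT : Tendsto (fun v : ℝ =>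
      (1/γ) * ((1 + v ^ (1/α)) ^ α - v) ^ (1/γ-1) * ((1 + v ^ (1/α)) ^ (α-1) * v ^ (1/α-1) - 1)
       + (1/γ) * ((1 + v ^ (1/β)) ^ β - v) ^ (1/γ-1) * ((1 + v ^ (1/β)) ^ (β-1) * v ^ (1/β-1) - 1))
      (𝓝[>] (0:ℝ)) (𝓝 ((1/γ * 1) * (-1) + (1/γ * 1) * (-1))) :=
    (((tApow α hα (1/γ-1)).const_mul (1/γ)).mul (tA' α hα)).add
      (((tApow β hβ (1/γ-1)).const_mul (1/γ)).mul (tA' β hβ))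
  have tG : Tendsto G (𝓝[>] (0:ℝ)) (𝓝 (1 - 2^γ)) := by
    have h1 := ((tSp.const_mul γ).mul tT).const_add 1
    have hval : 1 + γ * (2:ℝ)^(γ-1) * ((1/γ * 1) * (-1) + (1/γ * 1) * (-1)) = 1 - 2^γ := by
      have h2 : (2:ℝ)^γ = 2^(γ-1) * 2 := by
        rw [← Real.rpow_add_one two_ne_zero, sub_add_cancel]
      rw [h2]; field_simp; ring
    rw [hval] at h1
    exact h1
  have heq : deriv h =ᶠ[𝓝[>] (0:ℝ)] G := by
    filter_upwards [self_mem_nhdsWithin] with v hv using hderiv v hv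
  have htend : Tendsto (deriv h) (𝓝[>] (0:ℝ)) (𝓝 (1 - 2^γ)) := tG.congr' heq.symm
  -- value at 1
  have h2α : (1:ℝ) < 2 ^ α := by
    have : (2:ℝ)^(0:ℝ) < 2^α := Real.rpow_lt_rpow_of_exponent_lt one_lt_two hα.1
    simpa using this
  have h2β : (1:ℝ) < 2 ^ β := by
    have : (2:ℝ)^(0:ℝ) < 2^β := Real.rpow_lt_rpow_of_exponent_lt one_lt_two hβ.1
    simpa using this
  have ha : (0:ℝ) < 2^α - 1 := by linarith
  have hb : (0:ℝ) < 2^β - 1 := by linarith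
  have ha' : (2:ℝ)^(α-1) < 1 :=
    Real.rpow_lt_one_of_one_lt_of_neg one_lt_two (by linarith [hα.2])
  have hb' : (2:ℝ)^(β-1) < 1 :=
    Real.rpow_lt_one_of_one_lt_of_neg one_lt_two (by linarith [hβ.2])
  have ha'' : (1:ℝ)/2 < 2^(α-1) := by
    have := Real.rpow_lt_rpow_of_exponent_lt (x := 2) one_lt_two
      (show (-1:ℝ) < α-1 by linarith [hα.1])
    rw [Real.rpow_neg_one] at this
    linarith [this]
  have hb'' : (1:ℝ)/2 < 2^(β-1) := by
    have := Real.rpow_lt_rpow_of_exponent_lt (x := 2) one_lt_two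
      (show (-1:ℝ) < β-1 by linarith [hβ.1])
    rw [Real.rpow_neg_one] at this
    linarith [this]
  have hG1 : G 1 = 1 + γ * (((2:ℝ)^α-1)^(1/γ) + ((2:ℝ)^β-1)^(1/γ))^(γ-1) *
      ((1/γ) * ((2:ℝ)^α-1)^(1/γ-1) * ((2:ℝ)^(α-1) - 1)
        + (1/γ) * ((2:ℝ)^β-1)^(1/γ-1) * ((2:ℝ)^(β-1) - 1)) := by
    rw [hGdef]
    norm_num [Real.one_rpow]
  have hd1 : 0 < deriv h 1 := by
    rw [hderiv 1 one_pos, hG1]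
    set K := (((2:ℝ)^α-1)^(1/γ) + ((2:ℝ)^β-1)^(1/γ))^(γ-1) with hK
    set pa := ((2:ℝ)^α-1)^(1/γ-1) with hpa
    set pb := ((2:ℝ)^β-1)^(1/γ-1) with hpb
    have hKpos : 0 < K := Real.rpow_pos_of_pos
      (add_pos (Real.rpow_pos_of_pos ha _) (Real.rpow_pos_of_pos hb _)) _
    have hpapos : 0 < pa := Real.rpow_pos_of_pos ha _
    have hpbpos : 0 < pb := Real.rpow_pos_of_pos hb _
    have hxa : K * pa < 1 := coeff_lt_one hγ ha hb
    have hxb : K * pb < 1 := by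
      have := coeff_lt_one hγ hb ha
      rw [add_comm] at this
      exact this
    have hrw : γ * K * ((1/γ) * pa * ((2:ℝ)^(α-1) - 1) + (1/γ) * pb * ((2:ℝ)^(β-1) - 1))
        = (K * pa) * ((2:ℝ)^(α-1) - 1) + (K * pb) * ((2:ℝ)^(β-1) - 1) := by
      field_simp
    rw [hrw]
    have hda : (2:ℝ)^(α-1) - 1 < 0 := by linarith
    have hdb : (2:ℝ)^(β-1) - 1 < 0 := by linarith
    have hxa0 : 0 < K * pa := mul_pos hKpos hpapos
    have hxb0 : 0 < K * pb := mul_pos hKpos hpbpos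
    have h1 : (K * pa) * ((2:ℝ)^(α-1) - 1) > (2:ℝ)^(α-1) - 1 := by
      have := mul_lt_mul_of_neg_right hxa hda
      rwa [one_mul] at this
    have h2 : (K * pb) * ((2:ℝ)^(β-1) - 1) > (2:ℝ)^(β-1) - 1 := by
      have := mul_lt_mul_of_neg_right hxb hdb
      rwa [one_mul] at this
    linarith
  -- existence of a zero in (0,1)
  have hG1pos : 0 < G 1 := by rw [← hderiv 1 one_pos]; exact hd1
  obtain ⟨c, hc1, hcneg⟩ : ∃ c, c ∈ Set.Ioo (0:ℝ) 1 ∧ G c < 0 := by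
    have hev : ∀ᶠ v in 𝓝[>] (0:ℝ), G v < 0 := tG.eventually_lt_const (by linarith)
    have hmemIoo : Set.Ioo (0:ℝ) 1 ∈ 𝓝[>] (0:ℝ) :=
      Ioo_mem_nhdsGT_of_mem (by constructor <;> norm_num)
    have hmem : ∀ᶠ v in 𝓝[>] (0:ℝ), v ∈ Set.Ioo (0:ℝ) 1 :=
      eventually_of_mem hmemIoo (fun x hx => hx)
    rcases (hev.and hmem).exists with ⟨c, h1, h2⟩
    exact ⟨c, h2, h1⟩
  have hder : ∀ x ∈ Set.Icc c 1, HasDerivWithinAt h (G x) (Set.Icc c 1) x := fun x hx =>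
    (hd x (lt_of_lt_of_le hc1.1 hx.1)).hasDerivWithinAt
  have h01 : (0:ℝ) ∈ G '' Set.Ioo c 1 :=
    exists_hasDerivWithinAt_eq_of_gt_of_lt hc1.2.le hder hcneg hG1pos
  obtain ⟨v, hvmem, hGv⟩ := h01
  have hv01 : v ∈ Set.Ioo (0:ℝ) 1 := ⟨lt_trans hc1.1 hvmem.1, hvmem.2⟩
  have hv0 : deriv h v = 0 := by rw [hderiv v hv01.1, hGv]
  refine ⟨htend, by linarith, hd1, ⟨v, ⟨hv01, hv0⟩, ?_⟩, ?_⟩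
  · rintro w ⟨hw01, hw0⟩
    rcases lt_trichotomy w v with hlt | heqq | hgt
    · exfalso
      have := hmono (Set.mem_Ioi.2 hw01.1) (Set.mem_Ioi.2 hv01.1) hlt
      rw [hw0, hv0] at this
      exact lt_irrefl 0 this
    · exact heqq
    · exfalso
      have := hmono (Set.mem_Ioi.2 hv01.1) (Set.mem_Ioi.2 hw01.1) hgt
      rw [hw0, hv0] at this
      exact lt_irrefl 0 this
  · apply strictMonoOn_of_deriv_pos (convex_Ici 1)
    · intro x hx
      have hx1 : (1:ℝ) ≤ x := Set.mem_Ici.1 hx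
      exact (hd x (by linarith)).continuousAt.continuousWithinAt
    · intro x hx
      rw [interior_Ici] at hx
      have hx1 : (1:ℝ) < x := hx
      have := hmono (Set.mem_Ioi.2 one_pos) (Set.mem_Ioi.2 (by linarith : (0:ℝ) < x)) hx1
      linarith
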